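/- The Cayley–Menger determinant as a quadratic polynomial in one squared length. Let n ≥ 2 and fix nonnegative reals l_{ij} for 0 ≤ i < j ≤ n with (i,j) ≠ (0,n). For t ∈ ℝ, let M(t) be the (n+2)×(n+2) bordered Cayley–Menger matrix in which the entry for the pair (0,n) is −½ t (i.e., l_{0n}² = t) and all other entries are determined by the fixed l_{ij}. Then t ↦ det M(t) is a polynomial in t of degree at most 2, and its coefficient of t² equals −¼ · det M′, where M′ is the n×n bordered Cayley–Menger matrix of the lengths l_{ij} with 1 ≤ i < j ≤ n−1 (the vertices 0 and n omitted). -/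

import Mathlib

open Real

noncomputable def cayleyMengerSq {m : ℕ} (s : Fin m → Fin m → ℝ) :
    Matrix (Option (Fin m)) (Option (Fin m)) ℝ :=
  Matrix.of fun i j =>
    match i, j with
    | none, none => 0
    | none, some _ => 1
    | some _, none => 1
    | some a, some b => if a = b then 0 else -(1/2) * s a b

def cmToFun (n : ℕ) : Option (Fin (n + 1)) → (Fin 2 ⊕ Option (Fin (n - 1)))
  | none => Sum.inr none
  | some i =>
      if h0 : (i : ℕ) = 0 then Sum.inl 0
      else if hN : (i : ℕ) = n then Sum.inl 1
      else Sum.inr (some ⟨(i : ℕ) - 1, by have := i.isLt; omega⟩)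

def cmInvFun (n : ℕ) : (Fin 2 ⊕ Option (Fin (n - 1))) → Option (Fin (n + 1))
  | Sum.inl j => if j = 0 then some 0 else some (Fin.last n)
  | Sum.inr none => none
  | Sum.inr (some k) => some ⟨(k : ℕ) + 1, by have := k.isLt; omega⟩

/-- Reindexing equivalence putting vertices `0` and `n` first. -/
def cmEquiv (n : ℕ) (hn : 1 ≤ n) :
    Option (Fin (n + 1)) ≃ (Fin 2 ⊕ Option (Fin (n - 1))) where
  toFun := cmToFun n
  invFun := cmInvFun n
  left_inv x := by
    match x with
    | none => rfl
    | some i =>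
      by_cases h0 : (i : ℕ) = 0
      · rw [show cmToFun n (some i) = Sum.inl 0 from dif_pos h0]
        show some 0 = some i
        simp [Fin.ext_iff, h0.symm]
        omega
      · by_cases hNn : (i : ℕ) = n
        · rw [show cmToFun n (some i) = Sum.inl 1 from by
            rw [cmToFun, dif_neg h0, dif_pos hNn]]
          show (if (1 : Fin 2) = 0 then some 0 else some (Fin.last n)) = some i
          rw [if_neg (by decide)]
          simp [Fin.ext_iff, Fin.last, hNn.symm]
        · rw [show cmToFun n (some i) =
              Sum.inr (some ⟨(i : ℕ) - 1, by have := i.isLt; omega⟩) from by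
            rw [cmToFun, dif_neg h0, dif_neg hNn]]
          show some _ = some i
          simp only [Option.some.injEq, Fin.ext_iff]
          omega
  right_inv y := by
    match y with
    | Sum.inl j =>
      by_cases hj : j = 0
      · subst hj
        rw [show cmInvFun n (Sum.inl 0) = some 0 from by rw [cmInvFun, if_pos rfl]]
        rw [cmToFun]
        exact dif_pos rfl
      · have hj1 : j = 1 := by omega
        subst hj1
        rw [show cmInvFun n (Sum.inl 1) = some (Fin.last n) from by
          rw [cmInvFun, if_neg (by decide)]]
        have h1 : ((Fin.last n : Fin (n + 1)) : ℕ) = n := rfl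
        rw [cmToFun, dif_neg (by rw [h1]; omega), dif_pos h1]
    | Sum.inr none => rfl
    | Sum.inr (some k) =>
      have hk := k.isLt
      have h0 : ((k : ℕ) + 1) ≠ 0 := by omega
      have hNn : ((k : ℕ) + 1) ≠ n := by omega
      rw [show cmInvFun n (Sum.inr (some k)) =
          some ⟨(k : ℕ) + 1, by omega⟩ from rfl]
      rw [cmToFun, dif_neg h0, dif_neg hNn]
      simp

/-- **The Cayley–Menger determinant as a quadratic polynomial in one squared length.**
Fix `n ≥ 2` and nonnegative symmetric lengths `l i j` for the pairs of vertices
`0, …, n` other than `(0, n)`.  Letting `M t` be the bordered Cayley–Menger matrix in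
which the squared length of the pair `(0, n)` is `t`, the function `t ↦ det (M t)` is a
polynomial of degree at most `2` whose coefficient of `t²` is `−¼ det M′`, where `M′`
is the bordered Cayley–Menger matrix of the lengths on the vertices `1, …, n−1`. -/
theorem cayleyMenger_det_quadratic_in_squared_length (n : ℕ) (hn : 2 ≤ n)
    (l : Fin (n + 1) → Fin (n + 1) → ℝ)
    (hsym : ∀ i j, l i j = l j i) (hnonneg : ∀ i j, 0 ≤ l i j) :
    ∃ a b c : ℝ,
      (∀ t : ℝ,
        (cayleyMengerSq (fun i j =>
          if (i = 0 ∧ j = Fin.last n) ∨ (i = Fin.last n ∧ j = 0) then t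
          else (l i j) ^ 2)).det = a * t ^ 2 + b * t + c) ∧
      a = -(1/4) * (cayleyMengerSq (fun i j : Fin (n - 1) =>
          (l ⟨(i : ℕ) + 1, by have := i.isLt; omega⟩
             ⟨(j : ℕ) + 1, by have := j.isLt; omega⟩) ^ 2)).det := by
  classical
  have hn1 : 1 ≤ n := by omega
  set i0 : Option (Fin (n + 1)) := some 0 with hi0
  set iN : Option (Fin (n + 1)) := some (Fin.last n) with hiN
  have h0N : (0 : Fin (n + 1)) ≠ Fin.last n := by
    simp [Fin.ext_iff, Fin.last]; omega
  have hne : i0 ≠ iN := by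
    rw [hi0, hiN]
    exact fun h => h0N (Option.some_injective _ h)
  set A : ℝ → Matrix (Option (Fin (n + 1))) (Option (Fin (n + 1))) ℝ := fun t =>
    cayleyMengerSq (fun i j =>
      if (i = 0 ∧ j = Fin.last n) ∨ (i = Fin.last n ∧ j = 0) then t
      else (l i j) ^ 2) with hA
  set w0 : Option (Fin (n + 1)) → ℝ := fun j => if j = iN then -(1/2) else 0 with hw0
  set wN : Option (Fin (n + 1)) → ℝ := fun j => if j = i0 then -(1/2) else 0 with hwN
  set A0 := A 0 with hA0
  -- decomposition of A t via row updates
  have key : ∀ t : ℝ,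
      A t = ((A0.updateRow i0 (A0 i0 + t • w0)).updateRow iN (A0 iN + t • wN)) := by
    intro t
    ext i j
    rcases eq_or_ne i iN with rfl | hiNe
    · rw [Matrix.updateRow_self]
      simp only [hiN, hA, hA0, cayleyMengerSq, Matrix.of_apply, Pi.add_apply,
        Pi.smul_apply, smul_eq_mul]
      match j with
      | none => simp [hw0, hwN, hi0]
      | some b =>
        simp only [hwN, hi0, Option.some.injEq]
        rcases eq_or_ne (Fin.last n) b with rfl | hb
        · simp [h0N.symm]
        · simp only [if_neg (Ne.symm hb), if_neg hb]
          rcases eq_or_ne b 0 with rfl | hb0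
          · simp [h0N, Ne.symm h0N, mul_comm]
          · simp [hb, hb0, Ne.symm h0N]
    · rw [Matrix.updateRow_ne hiNe]
      rcases eq_or_ne i i0 with rfl | hi0e
      · rw [Matrix.updateRow_self]
        simp only [hi0, hA, hA0, cayleyMengerSq, Matrix.of_apply, Pi.add_apply,
          Pi.smul_apply, smul_eq_mul]
        match j with
        | none => simp [hw0, hiN]
        | some b =>
          simp only [hw0, hiN, Option.some.injEq]
          rcases eq_or_ne b (Fin.last n) with rfl | hb
          · simp [h0N, Ne.symm h0N, mul_comm]
          · simp only [if_neg hb]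
            rcases eq_or_ne (0 : Fin (n+1)) b with rfl | hb0
            · simp
            · simp [hb, hb0, h0N]
      · rw [Matrix.updateRow_ne hi0e]
        simp only [hA, hA0, cayleyMengerSq, Matrix.of_apply]
        match i, j with
        | none, none => rfl
        | none, some b => rfl
        | some a, none => rfl
        | some a, some b =>
          have ha0 : a ≠ 0 := fun h => hi0e (by rw [hi0, h])
          have haN : a ≠ Fin.last n := fun h => hiNe (by rw [hiN, h])
          simp [ha0, haN]
  -- update rows commute
  have comm : ∀ (M : Matrix (Option (Fin (n+1))) (Option (Fin (n+1))) ℝ)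
      (u v : Option (Fin (n+1)) → ℝ),
      (M.updateRow i0 u).updateRow iN v = (M.updateRow iN v).updateRow i0 u := by
    intro M u v
    ext i j
    rcases eq_or_ne i iN with rfl | hiNe
    · rw [Matrix.updateRow_self, Matrix.updateRow_ne (Ne.symm hne), Matrix.updateRow_self]
    · rw [Matrix.updateRow_ne hiNe]
      rcases eq_or_ne i i0 with rfl | hi0e
      · rw [Matrix.updateRow_self, Matrix.updateRow_self]
      · rw [Matrix.updateRow_ne hi0e, Matrix.updateRow_ne hi0e, Matrix.updateRow_ne hiNe]
  set B := (A0.updateRow iN wN).updateRow i0 w0 with hB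
  refine ⟨B.det,
    (A0.updateRow i0 w0).det + (A0.updateRow iN wN).det, A0.det, ?_, ?_⟩
  · intro t
    change (A t).det = _
    rw [key t]
    rw [Matrix.det_updateRow_add, Matrix.det_updateRow_smul]
    rw [comm A0 (A0 i0 + t • w0) (A0 iN), comm A0 (A0 i0 + t • w0) wN]
    rw [Matrix.updateRow_eq_self]
    rw [Matrix.det_updateRow_add, Matrix.det_updateRow_smul,
      Matrix.updateRow_eq_self,
      Matrix.det_updateRow_add, Matrix.det_updateRow_smul]
    have hself : (A0.updateRow iN wN).updateRow i0 (A0 i0) = A0.updateRow iN wN := by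
      rw [show A0 i0 = (A0.updateRow iN wN) i0 from (Matrix.updateRow_ne hne).symm,
        Matrix.updateRow_eq_self]
    rw [hself]
    ring
  · -- compute det B via block decomposition
    set e := cmEquiv n hn1 with he
    have hdet : B.det = (B.submatrix e.symm e.symm).det :=
      (Matrix.det_submatrix_equiv_self e.symm B).symm
    set D := cayleyMengerSq (fun i j : Fin (n - 1) =>
      (l ⟨(i : ℕ) + 1, by have := i.isLt; omega⟩
         ⟨(j : ℕ) + 1, by have := j.isLt; omega⟩) ^ 2) with hD
    set C : Matrix (Option (Fin (n-1))) (Fin 2) ℝ :=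
      Matrix.of fun r j => B (e.symm (Sum.inr r)) (e.symm (Sum.inl j)) with hC
    -- facts about e.symm
    have hesl0 : e.symm (Sum.inl 0) = i0 := rfl
    have hesl1 : e.symm (Sum.inl 1) = iN := by
      show (if (1 : Fin 2) = 0 then some 0 else some (Fin.last n)) = iN
      norm_num [hiN]
    have hesrn : e.symm (Sum.inr none) = none := rfl
    have hesrs : ∀ k : Fin (n-1), e.symm (Sum.inr (some k)) =
        some ⟨(k : ℕ) + 1, by have := k.isLt; omega⟩ := fun k => rfl
    have hblock : B.submatrix e.symm e.symm =
        Matrix.fromBlocks !![0, -(1/2); -(1/2), 0] 0 C D := by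
      ext i j
      match i, j with
      | Sum.inl a, Sum.inl b =>
        simp only [Matrix.submatrix_apply, Matrix.fromBlocks_apply₁₁]
        fin_cases a <;> fin_cases b
        · rw [show e.symm (Sum.inl ⟨0, by norm_num⟩) = i0 from rfl, hB,
            Matrix.updateRow_self]
          simp [hw0, hne]
        · rw [show e.symm (Sum.inl ⟨0, by norm_num⟩) = i0 from rfl,
            show e.symm (Sum.inl ⟨1, by norm_num⟩) = iN from hesl1, hB,
            Matrix.updateRow_self]
          simp [hw0]
        · rw [show e.symm (Sum.inl ⟨0, by norm_num⟩) = i0 from rfl,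
            show e.symm (Sum.inl ⟨1, by norm_num⟩) = iN from hesl1, hB,
            Matrix.updateRow_ne (Ne.symm hne), Matrix.updateRow_self]
          simp [hwN]
        · rw [show e.symm (Sum.inl ⟨1, by norm_num⟩) = iN from hesl1, hB,
            Matrix.updateRow_ne (Ne.symm hne), Matrix.updateRow_self]
          simp [hwN, Ne.symm hne]
      | Sum.inl a, Sum.inr b =>
        simp only [Matrix.submatrix_apply, Matrix.fromBlocks_apply₁₂, Matrix.zero_apply]
        have hbne0 : e.symm (Sum.inr b) ≠ i0 := by
          match b with
          | none => simp [hesrn, hi0]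
          | some k =>
            rw [hesrs k, hi0]
            simp only [Ne, Option.some.injEq]
            intro h
            exact Nat.succ_ne_zero _ (congrArg Fin.val h)
        have hbneN : e.symm (Sum.inr b) ≠ iN := by
          match b with
          | none => simp [hesrn, hiN]
          | some k =>
            rw [hesrs k, hiN]
            simp only [Ne, Option.some.injEq]
            intro h
            have h' : (k : ℕ) + 1 = n := congrArg Fin.val h
            have := k.isLt; omega
        fin_cases a
        · rw [show e.symm (Sum.inl ⟨0, by norm_num⟩) = i0 from rfl]
          simp only [hB]
          rw [Matrix.updateRow_self]
          simp [hw0, hbneN]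
        · rw [show e.symm (Sum.inl ⟨1, by norm_num⟩) = iN from hesl1]
          simp only [hB]
          rw [Matrix.updateRow_ne (Ne.symm hne), Matrix.updateRow_self]
          simp [hwN, hbne0]
      | Sum.inr a, Sum.inl b =>
        simp only [Matrix.submatrix_apply, Matrix.fromBlocks_apply₂₁, hC, Matrix.of_apply]
      | Sum.inr a, Sum.inr b =>
        simp only [Matrix.submatrix_apply, Matrix.fromBlocks_apply₂₂]
        have hane0 : e.symm (Sum.inr a) ≠ i0 := by
          match a with
          | none => simp [hesrn, hi0]
          | some k =>
            rw [hesrs k, hi0]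
            simp only [Ne, Option.some.injEq]
            intro h
            exact Nat.succ_ne_zero _ (congrArg Fin.val h)
        have haneN : e.symm (Sum.inr a) ≠ iN := by
          match a with
          | none => simp [hesrn, hiN]
          | some k =>
            rw [hesrs k, hiN]
            simp only [Ne, Option.some.injEq]
            intro h
            have h' : (k : ℕ) + 1 = n := congrArg Fin.val h
            have := k.isLt; omega
        rw [hB, Matrix.updateRow_ne hane0, Matrix.updateRow_ne haneN]
        match a, b with
        | none, none => rfl
        | none, some kb => rw [hesrn, hesrs kb]; rfl
        | some ka, none => rw [hesrn, hesrs ka]; rfl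
        | some ka, some kb =>
          rw [hesrs ka, hesrs kb]
          simp only [hA0, hA, hD, cayleyMengerSq, Matrix.of_apply]
          have h1 : (⟨(ka : ℕ) + 1, by have := ka.isLt; omega⟩ : Fin (n+1)) ≠ 0 :=
            fun h => Nat.succ_ne_zero _ (congrArg Fin.val h)
          have h2 : (⟨(ka : ℕ) + 1, by have := ka.isLt; omega⟩ : Fin (n+1)) ≠ Fin.last n := by
            intro h
            have h' : (ka : ℕ) + 1 = n := congrArg Fin.val h
            have := ka.isLt; omega
          have h3 : ((⟨(ka : ℕ) + 1, by have := ka.isLt; omega⟩ : Fin (n+1)) =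
              ⟨(kb : ℕ) + 1, by have := kb.isLt; omega⟩) ↔ ka = kb := by
            constructor
            · intro h
              have h' : (ka : ℕ) + 1 = (kb : ℕ) + 1 := congrArg Fin.val h
              exact Fin.ext (by omega)
            · rintro rfl; rfl
          rcases eq_or_ne ka kb with rfl | hkk
          · simp
          · rw [if_neg (fun h => hkk (h3.mp h)), if_neg hkk,
              if_neg (by rintro (⟨h, -⟩ | ⟨h, -⟩); exacts [h1 h, h2 h])]
    rw [hdet, hblock, Matrix.det_fromBlocks_zero₁₂]
    have h2x2 : (!![0, -(1/2); -(1/2), (0:ℝ)]).det = -(1/4) := by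
      rw [Matrix.det_fin_two_of]; norm_num
    rw [h2x2]
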